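/- Let G be a finite simple graph containing no cycle of length 4, 5, 6, 7, or 8, and let K be a cycle in G of length at most 12. If e_1 and e_2 are distinct chords of K, then there does not exist a triangle in G containing both e_1 and e_2. -/

import Mathlib

section Helpers

open SimpleGraph Walk

open SimpleGraph Walk

variable {V : Type*} {G : SimpleGraph V}

lemma walk_len2 {u v : V} (P : G.Walk u v) (h : P.length = 2) :
    ∃ (m : V) (h1 : G.Adj u m) (h2 : G.Adj m v),
      P = Walk.cons h1 (Walk.cons h2 Walk.nil) := by
  cases P with
  | nil => simp at h
  | cons h1 P' =>
    cases P' with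
    | nil => simp at h
    | cons h2 P'' =>
      cases P'' with
      | nil => exact ⟨_, h1, h2, rfl⟩
      | cons h3 P''' => simp [Walk.length_cons] at h

lemma mem_tail_of_closed {w : V} (K : G.Walk w w) (hK : K ≠ Walk.nil) {y : V}
    (hy : y ∈ K.support) : y ∈ K.support.tail := by
  cases K with
  | nil => exact (hK rfl).elim
  | cons h q =>
    simp only [Walk.support_cons, List.mem_cons] at hy
    rcases hy with rfl | hy
    · simpa using q.end_mem_support
    · simpa using hy

variable {V : Type*} [DecidableEq V] {G : SimpleGraph V}

lemma chord_arc
    (hG : ∀ (u : V) (W : G.Walk u u), W.IsCycle → ¬ (4 ≤ W.length ∧ W.length ≤ 8))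
    {x : V} (C : G.Walk x x) (hC : C.IsCycle) (hlen : C.length ≤ 12)
    {y : V} (hy : y ∈ C.support) (hxy : G.Adj x y) (hcy : s(x, y) ∉ C.edges) :
    10 ≤ C.length ∧
      ((C.takeUntil y hy).length = 2 ∨ (C.dropUntil y hy).length = 2) := by
  set P := C.takeUntil y hy with hP
  set Q := C.dropUntil y hy with hQ
  have hspec : P.append Q = C := C.take_spec hy
  have hsum : P.length + Q.length = C.length := by
    rw [← hspec, Walk.length_append]
  have hCE : C.edges = P.edges ++ Q.edges := by
    rw [← hspec, Walk.edges_append]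
  have hCS : C.support = P.support ++ Q.support.tail := by
    rw [← hspec, Walk.support_append]
  -- nodup facts
  have hCtrail := hC.isTrail
  have hEnodup : C.edges.Nodup := hCtrail.edges_nodup
  rw [hCE, List.nodup_append] at hEnodup
  obtain ⟨hPE, hQE, hPQdisj⟩ := hEnodup
  have hSTnodup : C.support.tail.Nodup := hC.support_nodup
  have hPS : P.support = x :: P.support.tail := P.support_eq_cons
  have hQS : Q.support = y :: Q.support.tail := Q.support_eq_cons
  have hCT : C.support.tail = P.support.tail ++ Q.support.tail := by
    rw [hCS, hPS]; rfl
  rw [hCT, List.nodup_append] at hSTnodup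
  obtain ⟨hPSn, hQSn, hSdisj⟩ := hSTnodup
  have hxQ : x ∈ Q.support.tail := by
    have := Q.end_mem_support
    rw [hQS] at this
    simpa [hxy.ne'] using this
  have hyP : y ∈ P.support.tail := by
    have := P.end_mem_support
    rw [hPS] at this
    simpa [hxy.ne] using this
  -- first cycle: P ++ edge (y,x)
  set W1 : G.Walk x x := P.append (Walk.cons hxy.symm Walk.nil) with hW1
  have hW1len : W1.length = P.length + 1 := by simp [hW1]
  have hW1cyc : W1.IsCycle := by
    rw [Walk.isCycle_def]
    refine ⟨?_, ?_, ?_⟩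
    · rw [Walk.isTrail_def]
      have : W1.edges = P.edges ++ [s(y, x)] := by simp [hW1]
      rw [this, List.nodup_append]
      refine ⟨hPE, by simp, ?_⟩
      intro e he e' he'
      simp at he'
      subst he'
      rintro rfl
      refine hcy ?_
      have := (C.edges_takeUntil_subset hy) he
      rwa [Sym2.eq_swap] at this
    · intro h
      have := congrArg Walk.length h
      simp [hW1len] at this
    · have : W1.support = P.support ++ [x] := by
        simp [hW1, Walk.support_append]
      rw [this, hPS]
      simp only [List.cons_append, List.tail_cons]
      rw [List.nodup_append]
      refine ⟨hPSn, by simp, ?_⟩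
      intro a ha a' ha'
      simp at ha'
      subst ha'
      exact hSdisj _ ha _ hxQ
  -- second cycle: edge (x,y) ++ Q
  set W2 : G.Walk x x := Walk.cons hxy Q with hW2
  have hW2len : W2.length = Q.length + 1 := by simp [hW2]
  have hW2cyc : W2.IsCycle := by
    rw [Walk.isCycle_def]
    refine ⟨?_, by simp [hW2], ?_⟩
    · rw [Walk.isTrail_def]
      have : W2.edges = s(x, y) :: Q.edges := by simp [hW2]
      rw [this, List.nodup_cons]
      exact ⟨fun h => hcy ((C.edges_dropUntil_subset hy) h), hQE⟩
    · have : W2.support.tail = Q.support := by simp [hW2]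
      rw [this, hQS, List.nodup_cons]
      exact ⟨fun h => hSdisj _ hyP _ h rfl, hQSn⟩
  have h1 := hG x W1 hW1cyc
  have h2 := hG x W2 hW2cyc
  have h3 := hG x C hC
  have h4 := hW1cyc.three_le_length
  have h5 := hW2cyc.three_le_length
  rw [hW1len] at h1 h4
  rw [hW2len] at h2 h5
  omega

lemma case_main
    (hG : ∀ (u : V) (W : G.Walk u u), W.IsCycle → ¬ (4 ≤ W.length ∧ W.length ≤ 8))
    {x : V} (C : G.Walk x x) (hC : C.IsCycle) (hlen : C.length ≤ 12)
    {y z : V} (hy : y ∈ C.support) (hz : z ∈ C.support)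
    (hxy : G.Adj x y) (hxz : G.Adj x z)
    (hcy : s(x, y) ∉ C.edges) (hcz : s(x, z) ∉ C.edges)
    (hyz : y ≠ z) (hadj : G.Adj y z)
    (h10 : 10 ≤ C.length)
    (hpy : (C.takeUntil y hy).length = 2)
    (hqz : (C.dropUntil z hz).length = 2) : False := by
  set P := C.takeUntil y hy with hPdef
  set T := C.takeUntil z hz with hTdef
  set Q := C.dropUntil z hz with hQdef
  obtain ⟨a, hxa, hay, hPshape⟩ := walk_len2 P hpy
  obtain ⟨b, hzb, hbx, hQshape⟩ := walk_len2 Q hqz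
  have hPE : P.edges = [s(x, a), s(a, y)] := by rw [hPshape]; simp
  have hQE : Q.edges = [s(z, b), s(b, x)] := by rw [hQshape]; simp
  -- decompositions of C
  have hCE2 : C.edges = T.edges ++ Q.edges := by
    rw [hTdef, hQdef, ← Walk.edges_append, C.take_spec hz]
  have hCE1 : C.edges = P.edges ++ (C.dropUntil y hy).edges := by
    rw [hPdef, ← Walk.edges_append, C.take_spec hy]
  have hTlen : T.length + Q.length = C.length := by
    rw [hTdef, hQdef, ← Walk.length_append, C.take_spec hz]
  have hTlen8 : 8 ≤ T.length := by omega
  -- C.edges nodup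
  have hEnodup : C.edges.Nodup := hC.isTrail.edges_nodup
  have hTQ : T.edges.Nodup ∧ Q.edges.Nodup ∧ T.edges.Disjoint Q.edges := by
    have := hEnodup
    rw [hCE2, List.nodup_append] at this
    exact ⟨this.1, this.2.1, fun a ha hb => this.2.2 a ha a hb rfl⟩
  -- P.edges ⊆ T.edges
  have hPsubT : P.edges ⊆ T.edges := by
    have hPlen2 : P.edges.length = 2 := by rw [Walk.length_edges, hpy]
    have h1 : C.edges.take 2 = P.edges := by
      rw [hCE1, ← hPlen2, List.take_left]
    have h2 : C.edges.take 2 = T.edges.take 2 := by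
      rw [hCE2, List.take_append_of_le_length]
      rw [Walk.length_edges]; omega
    rw [h2] at h1
    rw [← h1]
    exact List.take_subset _ _
  have hPQdisj : P.edges.Disjoint Q.edges := fun e he => hTQ.2.2 (hPsubT he)
  -- basic distinctness
  have hxa' : x ≠ a := hxa.ne
  have hay' : a ≠ y := hay.ne
  have hzb' : z ≠ b := hzb.ne
  have hbx' : b ≠ x := hbx.ne
  have hxY : x ≠ y := hxy.ne
  have hxZ : x ≠ z := hxz.ne
  have haz : a ≠ z := by
    rintro rfl
    exact hcz ((C.edges_takeUntil_subset hy) (by rw [hPE]; simp))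
  have hby : b ≠ y := by
    rintro rfl
    refine hcy ?_
    have : s(b, x) ∈ C.edges := (C.edges_dropUntil_subset hz) (by rw [hQE]; simp)
    rwa [Sym2.eq_swap] at this
  have hab : a ≠ b := by
    rintro rfl
    have h1 : s(x, a) ∈ P.edges := by rw [hPE]; simp
    have h2 : s(x, a) ∈ Q.edges := by rw [hQE, Sym2.eq_swap]; simp
    exact hPQdisj h1 h2
  have hbz := hzb'.symm
  -- the 5-cycle
  set W : G.Walk z z := Q.append (P.append (Walk.cons hadj Walk.nil)) with hW
  have hWlen : W.length = 5 := by
    simp [hW, Walk.length_append, hpy, hqz]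
  have hWedges : W.edges = [s(z, b), s(b, x), s(x, a), s(a, y), s(y, z)] := by
    simp [hW, Walk.edges_append, hPE, hQE]
  have hWsupp : W.support = [z, b, x, a, y, z] := by
    rw [hW, Walk.support_append, Walk.support_append, hPshape, hQshape]
    simp
  have hWcyc : W.IsCycle := by
    rw [Walk.isCycle_def]
    refine ⟨?_, ?_, ?_⟩
    · rw [Walk.isTrail_def, hWedges]
      simp only [List.nodup_cons, List.mem_cons, List.mem_singleton, List.not_mem_nil,
        or_false, not_or, List.nodup_nil, and_true, Sym2.eq, Sym2.rel_iff', Prod.mk.injEq,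
        Prod.swap_prod_mk]
      refine ⟨⟨?_, ?_, ?_, ?_⟩, ⟨?_, ?_, ?_⟩, ⟨?_, ?_⟩, ?_⟩ <;> tauto
    · intro h
      have := congrArg Walk.length h
      rw [hWlen] at this
      simp at this
    · rw [hWsupp]
      simp only [List.tail_cons]
      simp [List.nodup_cons, hbx', hby, hxa', hxY, hay', hyz, hab, hbz.symm, hxZ, haz,
        Ne.symm hxa', Ne.symm hay']
      tauto
  exact hG z W hWcyc ⟨by omega, by omega⟩

lemma core
    (hG : ∀ (u : V) (W : G.Walk u u), W.IsCycle → ¬ (4 ≤ W.length ∧ W.length ≤ 8))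
    {x : V} (C : G.Walk x x) (hC : C.IsCycle) (hlen : C.length ≤ 12)
    {y z : V} (hy : y ∈ C.support) (hz : z ∈ C.support)
    (hxy : G.Adj x y) (hxz : G.Adj x z)
    (hcy : s(x, y) ∉ C.edges) (hcz : s(x, z) ∉ C.edges)
    (hyz : y ≠ z) (hadj : G.Adj y z) : False := by
  obtain ⟨h10, hcy'⟩ := chord_arc hG C hC hlen hy hxy hcy
  obtain ⟨-, hcz'⟩ := chord_arc hG C hC hlen hz hxz hcz
  rcases hcy' with hpy | hqy <;> rcases hcz' with hpz | hqz
  · -- both takeUntil length 2 : y = z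
    obtain ⟨a, h1, h2, hPs⟩ := walk_len2 _ hpy
    obtain ⟨a', h1', h2', hPs'⟩ := walk_len2 _ hpz
    have e1 : C.support = x :: a :: y :: (C.dropUntil y hy).support.tail := by
      conv_lhs => rw [← C.take_spec hy]
      rw [Walk.support_append, hPs]; simp
    have e2 : C.support = x :: a' :: z :: (C.dropUntil z hz).support.tail := by
      conv_lhs => rw [← C.take_spec hz]
      rw [Walk.support_append, hPs']; simp
    rw [e1] at e2
    simp only [List.cons.injEq] at e2
    exact hyz e2.2.2.1
  · exact case_main hG C hC hlen hy hz hxy hxz hcy hcz hyz hadj h10 hpy hqz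
  · exact case_main hG C hC hlen hz hy hxz hxy hcz hcy (Ne.symm hyz) hadj.symm h10 hpz hqy
  · -- both dropUntil length 2 : y = z
    obtain ⟨b, hyb, hbx, hQs⟩ := walk_len2 _ hqy
    obtain ⟨b', hzb, hbx', hQs'⟩ := walk_len2 _ hqz
    have e1 : C.edges = (C.takeUntil y hy).edges ++ [s(y, b), s(b, x)] := by
      conv_lhs => rw [← C.take_spec hy]
      rw [Walk.edges_append, hQs]; simp
    have e2 : C.edges = (C.takeUntil z hz).edges ++ [s(z, b'), s(b', x)] := by
      conv_lhs => rw [← C.take_spec hz]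
      rw [Walk.edges_append, hQs']; simp
    rw [e1] at e2
    have := (List.append_inj' e2 rfl).2
    simp only [List.cons.injEq, and_true, Sym2.eq, Sym2.rel_iff', Prod.mk.injEq,
      Prod.swap_prod_mk] at this
    obtain ⟨hfst, hsnd⟩ := this
    have hbb : b = b' := by
      rcases hsnd with ⟨rfl, -⟩ | ⟨rfl, rfl⟩
      · rfl
      · exact absurd rfl hbx.ne
    subst hbb
    rcases hfst with ⟨rfl, -⟩ | ⟨rfl, rfl⟩
    · exact hyz rfl
    · exact absurd rfl hyb.ne

lemma apply_core
    (hG : ∀ (u : V) (W : G.Walk u u), W.IsCycle → ¬ (4 ≤ W.length ∧ W.length ≤ 8))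
    {w : V} (K : G.Walk w w) (hK : K.IsCycle) (hlen : K.length ≤ 12)
    {x y z : V} (hx : x ∈ K.support) (hy : y ∈ K.support) (hz : z ∈ K.support)
    (hxy : G.Adj x y) (hxz : G.Adj x z) (hadj : G.Adj y z)
    (hcy : s(x, y) ∉ K.edges) (hcz : s(x, z) ∉ K.edges) (hyz : y ≠ z) : False := by
  set C := K.rotate x hx with hCdef
  have hC : C.IsCycle := hK.rotate hx
  have hlenC : C.length = K.length := by
    have h1 := congrArg Walk.length (K.take_spec hx)
    rw [Walk.length_append] at h1
    rw [hCdef, Walk.rotate, Walk.length_append]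
    omega
  have hmem : ∀ {v : V}, v ∈ K.support → v ∈ C.support := by
    intro v hv
    have h1 : v ∈ K.support.tail := mem_tail_of_closed K hK.ne_nil hv
    have h2 : v ∈ C.support.tail :=
      ((Walk.support_rotate K x hx).perm.mem_iff).mpr h1
    exact List.mem_of_mem_tail h2
  have hedge : ∀ {e : Sym2 V}, e ∉ K.edges → e ∉ C.edges := fun he h =>
    he (((Walk.rotate_edges K x hx).perm.mem_iff).mp h)
  exact core hG C hC (by omega) (hmem hy) (hmem hz) hxy hxz
    (hedge hcy) (hedge hcz) hyz hadj

lemma triangle_shape {t : V} (T : G.Walk t t) (h : T.length = 3) :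
    ∃ (u v : V) (h1 : G.Adj t u) (h2 : G.Adj u v) (h3 : G.Adj v t),
      T = Walk.cons h1 (Walk.cons h2 (Walk.cons h3 Walk.nil)) := by
  cases T with
  | nil => simp at h
  | cons h1 T' =>
    cases T' with
    | nil => simp at h
    | cons h2 T'' =>
      cases T'' with
      | nil => simp at h
      | cons h3 T''' =>
        cases T''' with
        | nil => exact ⟨_, _, h1, h2, h3, rfl⟩
        | cons h4 T'''' => simp [Walk.length_cons] at h

end Helpers



/-- Lemma 5(d): in a finite simple graph with no cycles of lengths 4 to 8, if `e₁ = a₁b₁`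
and `e₂ = a₂b₂` are distinct chords of a cycle `K` of length at most 12, then no triangle
of `G` contains both `e₁` and `e₂`. -/
theorem no_triangle_with_two_chords {V : Type*} [Fintype V] (G : SimpleGraph V)
    (hG : ∀ (u : V) (W : G.Walk u u), W.IsCycle → ¬ (4 ≤ W.length ∧ W.length ≤ 8))
    {w : V} (K : G.Walk w w) (hK : K.IsCycle) (hlen : K.length ≤ 12)
    {a₁ b₁ a₂ b₂ : V}
    (hab₁ : G.Adj a₁ b₁) (ha₁ : a₁ ∈ K.support) (hb₁ : b₁ ∈ K.support)
    (hchord₁ : s(a₁, b₁) ∉ K.edges)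
    (hab₂ : G.Adj a₂ b₂) (ha₂ : a₂ ∈ K.support) (hb₂ : b₂ ∈ K.support)
    (hchord₂ : s(a₂, b₂) ∉ K.edges)
    (hne : s(a₁, b₁) ≠ s(a₂, b₂)) :
    ¬ ∃ (t : V) (T : G.Walk t t), T.IsCycle ∧ T.length = 3 ∧
        s(a₁, b₁) ∈ T.edges ∧ s(a₂, b₂) ∈ T.edges := by
  classical
  rintro ⟨t, T, hT, hT3, he1, he2⟩
  obtain ⟨u, v, h1, h2, h3, rfl⟩ := triangle_shape T hT3
  have main : ∀ x y z : V, G.Adj x y → G.Adj x z → G.Adj y z →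
      s(a₁, b₁) = s(x, y) → s(a₂, b₂) = s(x, z) → False := by
    intro x y z hxy hxz hadj heq1 heq2
    have hyz : y ≠ z := by
      rintro rfl
      exact hne (heq1.trans heq2.symm)
    have hmem1 : x ∈ K.support ∧ y ∈ K.support := by
      rw [Sym2.eq_iff] at heq1
      rcases heq1 with ⟨rfl, rfl⟩ | ⟨rfl, rfl⟩
      · exact ⟨ha₁, hb₁⟩
      · exact ⟨hb₁, ha₁⟩
    have hmem2 : z ∈ K.support := by
      rw [Sym2.eq_iff] at heq2
      rcases heq2 with ⟨rfl, rfl⟩ | ⟨rfl, rfl⟩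
      · exact hb₂
      · exact ha₂
    exact apply_core hG K hK hlen hmem1.1 hmem1.2 hmem2 hxy hxz hadj
      (heq1 ▸ hchord₁) (heq2 ▸ hchord₂) hyz
  simp only [SimpleGraph.Walk.edges_cons, SimpleGraph.Walk.edges_nil, List.mem_cons, List.not_mem_nil,
    or_false] at he1 he2
  rcases he1 with he1 | he1 | he1 <;> rcases he2 with he2 | he2 | he2
  · exact hne (he1.trans he2.symm)
  · exact main u t v h1.symm h2 h3.symm (he1.trans Sym2.eq_swap) he2
  · exact main t u v h1 h3.symm h2 he1 (he2.trans Sym2.eq_swap)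
  · exact main u v t h2 h1.symm h3 he1 (he2.trans Sym2.eq_swap)
  · exact hne (he1.trans he2.symm)
  · exact main v u t h2.symm h3 h1.symm (he1.trans Sym2.eq_swap) he2
  · exact main t v u h3.symm h1 h2.symm (he1.trans Sym2.eq_swap) he2
  · exact main v t u h3 h2.symm h1 he1 (he2.trans Sym2.eq_swap)
  · exact hne (he1.trans he2.symm)
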